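/- Let G be a simple connected graph on n vertices (n ≥ 1). Then E(G) ≥ 2√(n−1). -/

import Mathlib

open Finset Matrix

noncomputable section

variable {V : Type*} [Fintype V] [DecidableEq V]

/-- The adjacency matrix of a simple graph is Hermitian (over ℝ). -/
theorem SimpleGraph.isHermitian_adjMatrix' (G : SimpleGraph V) [DecidableRel G.Adj] :
    (G.adjMatrix ℝ).IsHermitian := by
  rw [Matrix.IsHermitian, Matrix.conjTranspose_eq_transpose_of_trivial]
  exact G.isSymm_adjMatrix

/-- The energy of a graph: the sum of the absolute values of the
eigenvalues of its adjacency matrix. -/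
def SimpleGraph.energy (G : SimpleGraph V) [DecidableRel G.Adj] : ℝ :=
  ∑ k, |G.isHermitian_adjMatrix'.eigenvalues k|

/-- The Randić index of a graph: the sum over the (unordered) edges `(i,j)`
of `1/√(deg i · deg j)`. -/
def SimpleGraph.randic (G : SimpleGraph V) [DecidableRel G.Adj] : ℝ :=
  ∑ e ∈ G.edgeFinset,
    Sym2.lift ⟨fun i j => 1 / Real.sqrt (G.degree i * G.degree j),
      fun i j => by simp [mul_comm]⟩ e

end

section helpers

lemma trace_eq_sum_eig {m : Type*} [Fintype m] [DecidableEq m] {A : Matrix m m ℝ}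
    (hA : A.IsHermitian) : A.trace = ∑ i, hA.eigenvalues i := by
  nth_rewrite 1 [hA.spectral_theorem]
  rw [Unitary.conjStarAlgAut_apply, Matrix.trace_mul_cycle, Unitary.coe_star_mul_self, Matrix.one_mul]
  simp [Matrix.trace_diagonal]

lemma trace_sq_eq_sum_eig_sq {m : Type*} [Fintype m] [DecidableEq m] {A : Matrix m m ℝ}
    (hA : A.IsHermitian) : (A * A).trace = ∑ i, hA.eigenvalues i ^ 2 := by
  set U : Matrix m m ℝ := (hA.eigenvectorUnitary : Matrix m m ℝ) with hU
  set D : Matrix m m ℝ := diagonal (RCLike.ofReal ∘ hA.eigenvalues) with hD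
  have hs : star U * U = 1 := Unitary.coe_star_mul_self _
  have h : A = U * D * star U := hA.spectral_theorem.trans (Unitary.conjStarAlgAut_apply _ _)
  have h2 : A * A = U * (D * D) * star U := by
    calc A * A = U * D * star U * (U * D * star U) := by rw [← h]
    _ = U * (D * D) * star U := by
        simp only [Matrix.mul_assoc]
        rw [← Matrix.mul_assoc (star U) U, hs, Matrix.one_mul]
  rw [h2, Matrix.trace_mul_cycle, ← Matrix.mul_assoc, hs, Matrix.one_mul]
  simp [hD, Matrix.diagonal_mul_diagonal, Matrix.trace_diagonal, sq]

lemma abs_sum_sq {m : Type*} [Fintype m] [DecidableEq m] (f : m → ℝ) (h0 : ∑ i, f i = 0) :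
    2 * ∑ i, f i ^ 2 ≤ (∑ i, |f i|) ^ 2 := by
  have key : ∑ i, ∑ j ∈ univ.erase i, (f i * f j) = - ∑ i, f i ^ 2 := by
    have : ∀ i : m, ∑ j ∈ univ.erase i, (f i * f j) = - f i ^ 2 := by
      intro i
      rw [← Finset.mul_sum, Finset.sum_erase_eq_sub (mem_univ i), h0]
      ring
    rw [Finset.sum_congr rfl fun i _ => this i, Finset.sum_neg_distrib]
  have habs : ∑ i, f i ^ 2 ≤ ∑ i, ∑ j ∈ univ.erase i, |f i * f j| := by
    calc ∑ i, f i ^ 2 = |∑ i, ∑ j ∈ univ.erase i, (f i * f j)| := by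
          rw [key, abs_neg, abs_of_nonneg (Finset.sum_nonneg fun i _ => sq_nonneg _)]
      _ ≤ ∑ i, |∑ j ∈ univ.erase i, (f i * f j)| := Finset.abs_sum_le_sum_abs _ _
      _ ≤ ∑ i, ∑ j ∈ univ.erase i, |f i * f j| :=
          Finset.sum_le_sum fun i _ => Finset.abs_sum_le_sum_abs _ _
  have expand : (∑ i, |f i|) ^ 2 = ∑ i, f i ^ 2 + ∑ i, ∑ j ∈ univ.erase i, |f i * f j| := by
    rw [sq, Finset.sum_mul_sum]
    rw [← Finset.sum_add_distrib]
    refine Finset.sum_congr rfl fun i _ => ?_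
    rw [← Finset.mul_sum, Finset.mul_sum, ← Finset.add_sum_erase _ _ (mem_univ i)]
    congr 1
    · rw [← abs_mul, abs_mul_self, sq]
    · exact Finset.sum_congr rfl fun j _ => (abs_mul _ _).symm
  linarith

lemma pred_exists {V : Type*} {G : SimpleGraph V} (hG : G.Connected) (r v : V) (hv : v ≠ r) :
    ∃ u, G.Adj u v ∧ G.dist r u + 1 = G.dist r v := by
  obtain ⟨p, hp⟩ := (hG v r).exists_walk_length_eq_dist
  cases p with
  | nil => exact absurd rfl hv
  | @cons _ u _ h q =>
    refine ⟨u, h.symm, ?_⟩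
    have h1 : G.dist r u ≤ q.length := by
      rw [SimpleGraph.dist_comm]; exact SimpleGraph.dist_le q
    have h2 : G.dist r v = q.length + 1 := by
      rw [SimpleGraph.dist_comm, ← hp]; simp
    have h3 : G.dist r v ≤ G.dist r u + 1 := by
      have := hG.dist_triangle (u := r) (v := u) (w := v)
      have huv : G.dist u v = 1 := SimpleGraph.dist_eq_one_iff_adj.mpr h.symm
      omega
    omega

lemma card_le_edges {V : Type*} [Fintype V] [DecidableEq V] {G : SimpleGraph V}
    [DecidableRel G.Adj] (hG : G.Connected) :
    Fintype.card V ≤ G.edgeFinset.card + 1 := by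
  classical
  obtain ⟨r⟩ := hG.nonempty
  -- map each v ≠ r to an edge
  have hchoice : ∀ v : V, v ≠ r → ∃ u, G.Adj u v ∧ G.dist r u + 1 = G.dist r v :=
    fun v hv => pred_exists hG r v hv
  choose f hf1 hf2 using hchoice
  have hinj : Set.InjOn (fun p : {v : V // v ≠ r} => s(f p.1 p.2, p.1))
      Set.univ := by
    rintro ⟨v, hv⟩ - ⟨w, hw⟩ - hvw
    simp only [Sym2.eq, Sym2.rel_iff', Prod.mk.injEq, Prod.swap_prod_mk] at hvw
    rcases hvw with ⟨-, h2⟩ | ⟨h1, h2⟩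
    · simpa using h2
    · exfalso
      have e1 := hf2 v hv
      have e2 := hf2 w hw
      rw [h1] at e1; rw [← h2] at e2
      omega
  have hmem : ∀ p : {v : V // v ≠ r}, s(f p.1 p.2, p.1) ∈ G.edgeFinset := by
    intro p
    rw [SimpleGraph.mem_edgeFinset]
    exact (hf1 p.1 p.2)
  have hcard : Fintype.card {v : V // v ≠ r} ≤ G.edgeFinset.card := by
    have := Finset.card_le_card_of_injOn (s := (Finset.univ : Finset {v : V // v ≠ r}))
      (fun p : {v : V // v ≠ r} => s(f p.1 p.2, p.1))
      (fun p _ => hmem p) (fun a _ b _ hab => hinj (Set.mem_univ a) (Set.mem_univ b) hab)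
    simpa [Finset.card_univ] using this
  have : Fintype.card {v : V // v ≠ r} = Fintype.card V - 1 := by
    simp [Fintype.card_subtype_compl, Fintype.card_subtype_eq]
  have hpos : 1 ≤ Fintype.card V := Fintype.card_pos_iff.mpr ⟨r⟩
  omega
end helpers

/-- A simple connected graph on `n ≥ 1` vertices has energy at least `2√(n-1)`. -/
theorem stmt5 {n : ℕ} (hn : 1 ≤ n)
    (G : SimpleGraph (Fin n)) [DecidableRel G.Adj] (hG : G.Connected) :
    2 * Real.sqrt ((n : ℝ) - 1) ≤ G.energy := by
  classical
  set hA := G.isHermitian_adjMatrix'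
  set lam := hA.eigenvalues with hlam
  -- sum of eigenvalues is zero
  have sum0 : ∑ i, lam i = 0 := by
    rw [← trace_eq_sum_eig hA, SimpleGraph.trace_adjMatrix]
  -- sum of squares of eigenvalues is twice the edge count
  have sumsq : ∑ i, lam i ^ 2 = 2 * (G.edgeFinset.card : ℝ) := by
    rw [← trace_sq_eq_sum_eig_sq hA]
    have : (G.adjMatrix ℝ * G.adjMatrix ℝ).trace = ∑ i, ((G.degree i : ℝ)) := by
      rw [Matrix.trace]
      exact Finset.sum_congr rfl fun i _ => G.adjMatrix_mul_self_apply_self i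
    rw [this]
    rw [← Nat.cast_sum, SimpleGraph.sum_degrees_eq_twice_card_edges]
    push_cast; ring
  -- edge count bound
  have hedge : (n : ℝ) - 1 ≤ (G.edgeFinset.card : ℝ) := by
    have h := card_le_edges hG
    rw [Fintype.card_fin] at h
    have : (n : ℝ) ≤ (G.edgeFinset.card : ℝ) + 1 := by exact_mod_cast h
    linarith
  -- energy squared bound
  have hE2 : 4 * ((n : ℝ) - 1) ≤ G.energy ^ 2 := by
    have := abs_sum_sq lam sum0
    rw [sumsq] at this
    have hEdef : G.energy = ∑ i, |lam i| := rfl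
    rw [hEdef]
    linarith
  have hEnn : 0 ≤ G.energy :=
    Finset.sum_nonneg fun i _ => abs_nonneg _
  have hnn : (0:ℝ) ≤ (n : ℝ) - 1 := by
    have : (1:ℝ) ≤ (n:ℝ) := by exact_mod_cast hn
    linarith
  calc 2 * Real.sqrt ((n : ℝ) - 1) = Real.sqrt (4 * ((n:ℝ) - 1)) := by
        rw [show (4:ℝ) * ((n:ℝ)-1) = 2^2 * ((n:ℝ)-1) by ring, Real.sqrt_mul (by positivity),
          Real.sqrt_sq (by norm_num)]
    _ ≤ Real.sqrt (G.energy ^ 2) := Real.sqrt_le_sqrt hE2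
    _ = G.energy := Real.sqrt_sq hEnn
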